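/- For every extended equilibrium x* of the path-graph dynamics ẋ₁ = q(x₂) - x₁, ẋ_i = q(x_{i-1}) + q(x_{i+1}) - 2x_i (2 ≤ i ≤ N-1), ẋ_N = q(x_{N-1}) - x_N, one has max_{i,j} |x*_j - x*_i| ≤ (N-2)²/4. -/
import Mathlib


lemma tent_sum : ∀ L : ℕ, ∑ s ∈ Finset.range (L+1), min (s:ℝ) ((L:ℝ) - s) ≤ (L:ℝ)^2/4 := by
  intro L
  induction L using Nat.strong_induction_on with
  | _ L ih =>
    match L with
    | 0 => simp
    | 1 =>
      norm_num [Finset.sum_range_succ]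
    | (L+2) =>
      have h := ih L (by omega)
      have e1 : ∑ s ∈ Finset.range (L+2+1), min (s:ℝ) (((L:ℝ)+2) - s)
          = ∑ s ∈ Finset.range (L+1), (min (s:ℝ) ((L:ℝ) - s) + 1) := by
        rw [Finset.sum_range_succ, Finset.sum_range_succ']
        have hlast : min ((L+2:ℕ):ℝ) (((L:ℝ)+2) - ((L+2:ℕ):ℝ)) = 0 := by
          push_cast
          rw [show ((L:ℝ)+2) - ((L:ℝ)+2) = 0 by ring, min_eq_right (by positivity)]
        have hfirst : min ((0:ℕ):ℝ) (((L:ℝ)+2) - ((0:ℕ):ℝ)) = 0 := by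
          push_cast
          rw [sub_zero, min_eq_left (by positivity)]
        rw [hlast, hfirst, add_zero, add_zero]
        refine Finset.sum_congr rfl fun s _ => ?_
        push_cast
        rw [show ((L:ℝ)+2) - ((s:ℝ)+1) = ((L:ℝ) - s) + 1 by ring,
          min_add_add_right]
      push_cast
      rw [e1, Finset.sum_add_distrib, Finset.sum_const, Finset.card_range,
        nsmul_eq_mul]
      push_cast
      nlinarith [h]

lemma int_abs_half (a : ℤ) (h : |(a:ℝ)| ≤ 1/2) : a = 0 := by
  have h1 : |(a:ℝ)| < 1 := lt_of_le_of_lt h (by norm_num)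
  have h2 : |a| < 1 := by exact_mod_cast (by rwa [← Int.cast_abs] at h1 : ((|a|:ℤ):ℝ) < 1)
  rcases abs_lt.mp h2 with ⟨h3, h4⟩; omega


/-- `x` is an extended equilibrium of the path-graph dynamics with quantization
levels `k` (components indexed by 1,…,N): the affine field `f_k` vanishes at `x`
and `x` lies in the closure of `S_k`. -/
def IsPathExtendedEquilibrium (N : ℕ) (x : ℕ → ℝ) (k : ℕ → ℤ) : Prop :=
  ((k 2 : ℝ) - x 1 = 0) ∧
  (∀ i : ℕ, 2 ≤ i → i ≤ N - 1 → (k (i - 1) : ℝ) + (k (i + 1) : ℝ) - 2 * x i = 0) ∧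
  ((k (N - 1) : ℝ) - x N = 0) ∧
  (∀ i : ℕ, 1 ≤ i → i ≤ N → (k i : ℝ) - 1/2 ≤ x i ∧ x i ≤ (k i : ℝ) + 1/2)

theorem path_equilibrium_distance_bound (N : ℕ) (hN : 2 ≤ N)
    (x : ℕ → ℝ) (k : ℕ → ℤ) (hx : IsPathExtendedEquilibrium N x k) :
    ∀ i j : ℕ, 1 ≤ i → i ≤ N → 1 ≤ j → j ≤ N →
      |x j - x i| ≤ ((N : ℝ) - 2) ^ 2 / 4 := by
  obtain ⟨h1, h2, h3, h4⟩ := hx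
  set B : ℝ := ((N : ℝ) - 2) ^ 2 / 4 with hB
  -- increments
  set d : ℕ → ℤ := fun m => k m - k (m - 1) with hd
  -- k 1 = k 2
  have hk12 : d 2 = 0 := by
    have hb := h4 1 le_rfl (by omega)
    apply int_abs_half
    rw [abs_le]
    constructor <;> (simp only [hd]; push_cast; linarith [h1, hb.1, hb.2])
  have hkN : d N = 0 := by
    have hb := h4 N (by omega) le_rfl
    apply int_abs_half
    rw [abs_le]
    constructor <;> (simp only [hd]; push_cast; linarith [h3, hb.1, hb.2])
  -- second difference bound : for 2 ≤ m ≤ N-1, |d (m+1) - d m| ≤ 1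
  have hsec : ∀ m : ℕ, 2 ≤ m → m ≤ N - 1 → |d (m+1) - d m| ≤ 1 := by
    intro m hm1 hm2
    have he := h2 m hm1 hm2
    have hb := h4 m (by omega) (by omega)
    have hcast : |((d (m+1) - d m : ℤ) : ℝ)| ≤ 1 := by
      have hm1' : m - 1 + 1 = m := by omega
      have : ((d (m+1) - d m : ℤ) : ℝ) = (k (m-1) : ℝ) + (k (m+1) : ℝ) - 2 * (k m : ℝ) := by
        simp only [hd]
        push_cast [hm1']
        ring
      rw [this, abs_le]
      constructor <;> linarith [hb.1, hb.2]
    have : |d (m+1) - d m| ≤ 1 := by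
      exact_mod_cast (by rwa [← Int.cast_abs] at hcast : ((|d (m+1) - d m|:ℤ):ℝ) ≤ 1)
    exact this
  -- left bound: |d m| ≤ m - 2 for 2 ≤ m ≤ N
  have hdl : ∀ m : ℕ, 2 ≤ m → m ≤ N → |d m| ≤ (m : ℤ) - 2 := by
    intro m hm
    induction m, hm using Nat.le_induction with
    | base => intro _; simp [hk12]
    | succ m hm ih =>
      intro hmN
      have h1' := ih (by omega)
      have h2' := hsec m hm (by omega)
      have : |d (m+1)| ≤ |d m| + |d (m+1) - d m| := by
        calc |d (m+1)| = |d m + (d (m+1) - d m)| := by ring_nf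
          _ ≤ |d m| + |d (m+1) - d m| := abs_add_le _ _
      push_cast
      omega
  -- right bound: |d m| ≤ N - m for 2 ≤ m ≤ N
  have hdr : ∀ t : ℕ, ∀ m : ℕ, 2 ≤ m → m ≤ N → N - m = t → |d m| ≤ (t : ℤ) := by
    intro t
    induction t with
    | zero =>
      intro m hm1 hm2 hm3
      have : m = N := by omega
      subst this; simp [hkN]
    | succ t ih =>
      intro m hm1 hm2 hm3
      have hmN : m ≤ N - 1 := by omega
      have h1' := ih (m+1) (by omega) (by omega) (by omega)
      have h2' := hsec m hm1 hmN
      have : |d m| ≤ |d (m+1)| + |d (m+1) - d m| := by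
        calc |d m| = |d (m+1) - (d (m+1) - d m)| := by ring_nf
          _ ≤ |d (m+1)| + |d (m+1) - d m| := abs_sub _ _
      omega
  -- real bound on increments, tent version
  have hg : ∀ m : ℕ, 2 ≤ m → m ≤ N → |((d m : ℤ) : ℝ)| ≤ min ((m:ℝ) - 2) ((N:ℝ) - m) := by
    intro m hm1 hm2
    have hl := hdl m hm1 hm2
    have hr := hdr (N - m) m hm1 hm2 rfl
    rw [le_min_iff, ← Int.cast_abs]
    constructor
    · exact_mod_cast hl
    · have hcast : ((N - m : ℕ) : ℝ) = (N:ℝ) - m := by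
        push_cast [Nat.cast_sub hm2]; ring
      calc ((|d m| : ℤ) : ℝ) ≤ ((N - m : ℕ) : ℝ) := by exact_mod_cast hr
        _ = (N:ℝ) - m := hcast
  -- bound on |k p - k q|
  have hkdiff : ∀ q p : ℕ, 1 ≤ q → q ≤ p → p ≤ N → |(k p : ℝ) - (k q : ℝ)| ≤ B := by
    intro q p hq hqp hpN
    have htel : (k p : ℝ) - (k q : ℝ)
        = ∑ t ∈ Finset.range (p - q), ((k (q + t + 1) : ℝ) - (k (q + t) : ℝ)) := by
      have h := Finset.sum_range_sub (fun t => (k (q + t) : ℝ)) (p - q)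
      simp only [← add_assoc] at h
      rw [Nat.add_sub_cancel' hqp, add_zero] at h
      exact h.symm
    rw [htel]
    have step : ∀ t ∈ Finset.range (p - q),
        |(k (q + t + 1) : ℝ) - (k (q + t) : ℝ)|
          ≤ min (((q - 1 + t : ℕ)):ℝ) ((N:ℝ) - 2 - ((q - 1 + t : ℕ):ℝ)) := by
      intro t ht
      have htpq : t < p - q := Finset.mem_range.mp ht
      have hm1 : 2 ≤ q + t + 1 := by omega
      have hm2 : q + t + 1 ≤ N := by omega
      have := hg (q + t + 1) hm1 hm2
      have hdm : ((d (q + t + 1) : ℤ) : ℝ) = (k (q + t + 1) : ℝ) - (k (q + t) : ℝ) := by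
        simp only [hd]
        have : q + t + 1 - 1 = q + t := by omega
        rw [this]; push_cast; ring
      rw [hdm] at this
      refine this.trans (le_of_eq ?_)
      have hc : ((q - 1 + t : ℕ) : ℝ) = (q:ℝ) + t - 1 := by
        push_cast [Nat.cast_sub hq]; ring
      rw [hc]
      congr 1 <;> push_cast <;> ring
    calc |∑ t ∈ Finset.range (p - q), ((k (q + t + 1) : ℝ) - (k (q + t) : ℝ))|
        ≤ ∑ t ∈ Finset.range (p - q), |(k (q + t + 1) : ℝ) - (k (q + t) : ℝ)| :=
          Finset.abs_sum_le_sum_abs _ _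
      _ ≤ ∑ t ∈ Finset.range (p - q),
            min (((q - 1 + t : ℕ)):ℝ) ((N:ℝ) - 2 - ((q - 1 + t : ℕ):ℝ)) :=
          Finset.sum_le_sum step
      _ = ∑ s ∈ Finset.Ico (q-1) (p-1), min ((s:ℕ):ℝ) ((N:ℝ) - 2 - (s:ℝ)) := by
          rw [Finset.sum_Ico_eq_sum_range]
          have : p - 1 - (q - 1) = p - q := by omega
          rw [this]
      _ ≤ ∑ s ∈ Finset.range (N-1), min ((s:ℕ):ℝ) ((N:ℝ) - 2 - (s:ℝ)) := by
          rw [Finset.range_eq_Ico]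
          apply Finset.sum_le_sum_of_subset_of_nonneg
          · apply Finset.Ico_subset_Ico (by omega) (by omega)
          · intro s hs _
            have hs' : s < N - 1 := (Finset.mem_Ico.mp hs).2
            have : (s:ℝ) ≤ (N:ℝ) - 2 := by
              have : (s:ℕ) + 2 ≤ N := by omega
              have := (Nat.cast_le (α := ℝ)).mpr this
              push_cast at this; linarith
            exact le_min (by positivity) (by linarith)
      _ ≤ B := by
          have hrange : N - 1 = (N - 2) + 1 := by omega
          have hcast : ((N - 2 : ℕ) : ℝ) = (N:ℝ) - 2 := by
            push_cast [Nat.cast_sub hN]; ring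
          rw [hB, hrange]
          calc ∑ s ∈ Finset.range ((N-2)+1), min (s:ℝ) ((N:ℝ) - 2 - (s:ℝ))
              = ∑ s ∈ Finset.range ((N-2)+1), min (s:ℝ) (((N-2:ℕ):ℝ) - (s:ℝ)) := by
                rw [hcast]
            _ ≤ ((N-2:ℕ):ℝ)^2/4 := tent_sum _
            _ = ((N:ℝ) - 2)^2/4 := by rw [hcast]
  -- every x i is between some k q and some k p
  have hup : ∀ i : ℕ, 1 ≤ i → i ≤ N → ∃ p, 1 ≤ p ∧ p ≤ N ∧ x i ≤ (k p : ℝ) := by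
    intro i hi1 hi2
    by_cases hc1 : i = 1
    · exact ⟨2, by omega, hN, by rw [hc1]; linarith [h1]⟩
    by_cases hc2 : i = N
    · exact ⟨N-1, by omega, by omega, by rw [hc2]; linarith [h3]⟩
    have hint : 2 ≤ i ∧ i ≤ N - 1 := by omega
    have he := h2 i hint.1 hint.2
    rcases le_total (k (i-1)) (k (i+1)) with hle | hle
    · exact ⟨i+1, by omega, by omega, by
        have : (k (i-1) : ℝ) ≤ (k (i+1) : ℝ) := by exact_mod_cast hle
        linarith⟩
    · exact ⟨i-1, by omega, by omega, by
        have : (k (i+1) : ℝ) ≤ (k (i-1) : ℝ) := by exact_mod_cast hle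
        linarith⟩
  have hlo : ∀ i : ℕ, 1 ≤ i → i ≤ N → ∃ q, 1 ≤ q ∧ q ≤ N ∧ (k q : ℝ) ≤ x i := by
    intro i hi1 hi2
    by_cases hc1 : i = 1
    · exact ⟨2, by omega, hN, by rw [hc1]; linarith [h1]⟩
    by_cases hc2 : i = N
    · exact ⟨N-1, by omega, by omega, by rw [hc2]; linarith [h3]⟩
    have hint : 2 ≤ i ∧ i ≤ N - 1 := by omega
    have he := h2 i hint.1 hint.2
    rcases le_total (k (i-1)) (k (i+1)) with hle | hle
    · exact ⟨i-1, by omega, by omega, by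
        have : (k (i-1) : ℝ) ≤ (k (i+1) : ℝ) := by exact_mod_cast hle
        linarith⟩
    · exact ⟨i+1, by omega, by omega, by
        have : (k (i+1) : ℝ) ≤ (k (i-1) : ℝ) := by exact_mod_cast hle
        linarith⟩
  -- one-sided bound
  have key : ∀ i j : ℕ, 1 ≤ i → i ≤ N → 1 ≤ j → j ≤ N → x j - x i ≤ B := by
    intro i j hi1 hi2 hj1 hj2
    obtain ⟨p, hp1, hp2, hpx⟩ := hup j hj1 hj2
    obtain ⟨q, hq1, hq2, hqx⟩ := hlo i hi1 hi2
    have hdiff : (k p : ℝ) - (k q : ℝ) ≤ B := by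
      rcases le_total q p with h | h
      · exact (le_abs_self _).trans (hkdiff q p hq1 h hp2)
      · have := hkdiff p q hp1 h hq2
        rw [abs_sub_comm] at this
        exact (le_abs_self _).trans this
    linarith
  intro i j hi1 hi2 hj1 hj2
  rw [abs_sub_le_iff]
  exact ⟨key i j hi1 hi2 hj1 hj2, key j i hj1 hj2 hi1 hi2⟩
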